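/- Let r₁, r₂ > 0 and s₂ ∈ ℝ be constants, and let a, ã, b, b̃, c, c̃, d : ℝ → ℝ be differentiable functions of the variable s₁ satisfying, for every s₁ ∈ ℝ: (i) r₁·c'(s₁) = 2·r₂·d(s₁)² + 2·s₁; (ii) c̃'(s₁) = 2·d(s₁)²; (iii) d'(s₁) = 2·c(s₁)·d(s₁) − 2·b̃(s₁) and r₁·d'(s₁) = r₂·(2·c̃(s₁)·d(s₁) − 2·b(s₁)); (iv) −(r₁·b + r₂·b̃)'(s₁) = r₂·(4·a(s₁)·d(s₁) + 4·ã(s₁)·d(s₁) + 2·b(s₁)·c̃(s₁) + 2·b̃(s₁)·c(s₁)) + 2·s₂·d(s₁); (v) r₁·(2·a(s₁) + c(s₁)²) = r₂·d(s₁)² + s₁; (vi) r₂·(2·ã(s₁) + c̃(s₁)²) = r₁·d(s₁)² + s₂; (vii) r₂·b(s₁) − r₁·b̃(s₁) = (r₂·c̃(s₁) − r₁·c(s₁))·d(s₁). Then d is twice differentiable and satisfies, for all s₁ ∈ ℝ, the differential equation d''(s₁) = 8·(r₂/r₁)·((r₁·s₂ + r₂·s₁)/(r₁² + r₂²))·d(s₁)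 + 8·(r₂/r₁)·d(s₁)³. -/

import Mathlib

/-- From the Lax-pair compatibility relations for the entries of
the residue matrix `M₁`, the entry `d` satisfies a scaled and shifted
Painlevé II equation. -/
theorem d_satisfies_scaled_painleveII
    (r₁ r₂ s₂ : ℝ) (hr₁ : 0 < r₁) (hr₂ : 0 < r₂)
    (a at' b bt c ct d : ℝ → ℝ)
    (ha : Differentiable ℝ a) (hat : Differentiable ℝ at')
    (hb : Differentiable ℝ b) (hbt : Differentiable ℝ bt)
    (hc : Differentiable ℝ c) (hct : Differentiable ℝ ct)
    (hd : Differentiable ℝ d)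
    (h1 : ∀ s₁ : ℝ, r₁ * deriv c s₁ = 2 * r₂ * (d s₁) ^ 2 + 2 * s₁)
    (h2 : ∀ s₁ : ℝ, deriv ct s₁ = 2 * (d s₁) ^ 2)
    (h3 : ∀ s₁ : ℝ, deriv d s₁ = 2 * c s₁ * d s₁ - 2 * bt s₁)
    (h3' : ∀ s₁ : ℝ, r₁ * deriv d s₁ = r₂ * (2 * ct s₁ * d s₁ - 2 * b s₁))
    (h4 : ∀ s₁ : ℝ, -(deriv (fun s => r₁ * b s + r₂ * bt s) s₁) =
        r₂ * (4 * a s₁ * d s₁ + 4 * at' s₁ * d s₁ +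
          2 * b s₁ * ct s₁ + 2 * bt s₁ * c s₁) + 2 * s₂ * d s₁)
    (h5 : ∀ s₁ : ℝ, r₁ * (2 * a s₁ + (c s₁) ^ 2) = r₂ * (d s₁) ^ 2 + s₁)
    (h6 : ∀ s₁ : ℝ, r₂ * (2 * at' s₁ + (ct s₁) ^ 2) = r₁ * (d s₁) ^ 2 + s₂)
    (h7 : ∀ s₁ : ℝ, r₂ * b s₁ - r₁ * bt s₁ = (r₂ * ct s₁ - r₁ * c s₁) * d s₁) :
    Differentiable ℝ (deriv d) ∧
      ∀ s₁ : ℝ, deriv (deriv d) s₁ =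
        8 * (r₂ / r₁) * ((r₁ * s₂ + r₂ * s₁) / (r₁ ^ 2 + r₂ ^ 2)) * d s₁ +
          8 * (r₂ / r₁) * (d s₁) ^ 3 := by

  have hr₁' : r₁ ≠ 0 := ne_of_gt hr₁
  have hR : (r₁ ^ 2 + r₂ ^ 2) ≠ 0 := by positivity
  have hdg : deriv d = fun s =>
      (2 * r₂ / (r₁ ^ 2 + r₂ ^ 2)) *
        ((r₁ * ct s + r₂ * c s) * d s - (r₁ * b s + r₂ * bt s)) := by
    funext s
    have key : (r₁ ^ 2 + r₂ ^ 2) * deriv d s =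
        2 * r₂ * ((r₁ * ct s + r₂ * c s) * d s - (r₁ * b s + r₂ * bt s)) := by
      linear_combination r₁ * h3' s + r₂ ^ 2 * h3 s
    field_simp
    linarith [key]
  have hBdiff : Differentiable ℝ (fun s => r₁ * b s + r₂ * bt s) :=
    (hb.const_mul r₁).add (hbt.const_mul r₂)
  have hgdiff : Differentiable ℝ (fun s =>
      (2 * r₂ / (r₁ ^ 2 + r₂ ^ 2)) *
        ((r₁ * ct s + r₂ * c s) * d s - (r₁ * b s + r₂ * bt s))) :=
    ((((hct.const_mul r₁).add (hc.const_mul r₂)).mul hd).sub hBdiff).const_mul _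
  constructor
  · rw [hdg]; exact hgdiff
  · intro s
    have H1 : HasDerivAt (fun s => r₁ * ct s + r₂ * c s)
        (r₁ * deriv ct s + r₂ * deriv c s) s :=
      (((hct s).hasDerivAt.const_mul r₁)).add (((hc s).hasDerivAt.const_mul r₂))
    have H2 := H1.mul (hd s).hasDerivAt
    have H3 := (hBdiff s).hasDerivAt
    have H4 : HasDerivAt (fun s => 2 * r₂ / (r₁ ^ 2 + r₂ ^ 2) *
        ((r₁ * ct s + r₂ * c s) * d s - (r₁ * b s + r₂ * bt s)))
        (2 * r₂ / (r₁ ^ 2 + r₂ ^ 2) *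
          ((r₁ * deriv ct s + r₂ * deriv c s) * d s + (r₁ * ct s + r₂ * c s) * deriv d s -
            deriv (fun s => r₁ * b s + r₂ * bt s) s)) s :=
      (H2.sub H3).const_mul (2 * r₂ / (r₁ ^ 2 + r₂ ^ 2))
    rw [hdg, H4.deriv]
    have e1 := h1 s; have e2 := h2 s; have e3 := h3 s; have e3' := h3' s
    have e4 := h4 s; have e5 := h5 s; have e6 := h6 s
    have key : r₁ * ((r₁ * deriv ct s + r₂ * deriv c s) * d s + (r₁ * ct s + r₂ * c s) * deriv d s -
        deriv (fun s => r₁ * b s + r₂ * bt s) s) =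
        4 * (r₁ * s₂ + r₂ * s) * d s + 4 * (r₁ ^ 2 + r₂ ^ 2) * d s ^ 3 := by
      linear_combination r₁ ^ 2 * d s * e2 + r₂ * d s * e1 + r₁ * e4 + r₁ * ct s * e3' +
        r₁ * r₂ * c s * e3 + 2 * r₂ * d s * e5 + 2 * r₁ * d s * e6
    field_simp
    linear_combination 2 * key
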